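/- Let H be a Hopf G-coalgebra. Then for all g, h ∈ G, the antipode satisfies Δ_{h^{-1},g^{-1}} ∘ S_{gh} = (S_h ⊗ S_g) ∘ τ ∘ Δ_{g,h}, where τ is the flip of tensor factors. That is, the antipode is an anti-coalgebra morphism. -/
import Mathlib


open TensorProduct

/-- Cast along an equality of indices, as a linear map. -/
def castLM (k : Type*) [Field k] {G : Type*} (H : G → Type*)
    [∀ g, AddCommGroup (H g)] [∀ g, Module k (H g)] {a b : G} (hab : a = b) :
    H a →ₗ[k] H b where
  toFun x := hab ▸ x
  map_add' x y := by subst hab; rfl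
  map_smul' c x := by subst hab; rfl

/-- A Hopf `G`-coalgebra over a field `k`: a family of `k`-algebras `(H g, mul g, one g)`
together with comultiplication algebra morphisms `Δ g h : H (g*h) → H g ⊗ H h`,
a counit `ε : H 1 → k` and an antipode `S g : H g → H g⁻¹`. -/
structure HopfGCoalgebra (k : Type*) [Field k] (G : Type*) [Group G]
    (H : G → Type*) [∀ g, AddCommGroup (H g)] [∀ g, Module k (H g)] where
  mul : ∀ g : G, H g ⊗[k] H g →ₗ[k] H g
  one : ∀ g : G, H g
  comul : ∀ g h : G, H (g * h) →ₗ[k] H g ⊗[k] H h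
  counit : H (1 : G) →ₗ[k] k
  S : ∀ g : G, H g →ₗ[k] H g⁻¹
  mul_assoc' : ∀ (g : G) (x y z : H g),
    mul g (mul g (x ⊗ₜ[k] y) ⊗ₜ[k] z) = mul g (x ⊗ₜ[k] mul g (y ⊗ₜ[k] z))
  one_mul' : ∀ (g : G) (x : H g), mul g (one g ⊗ₜ[k] x) = x
  mul_one' : ∀ (g : G) (x : H g), mul g (x ⊗ₜ[k] one g) = x
  coassoc : ∀ (g h l : G) (x : H (g * h * l)),
    (TensorProduct.assoc k (H g) (H h) (H l))
      (TensorProduct.map (comul g h) LinearMap.id (comul (g * h) l x))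
    = TensorProduct.map LinearMap.id (comul h l)
        (comul g (h * l) (castLM k H (mul_assoc g h l) x))
  counit_left : ∀ (g : G) (x : H ((1 : G) * g)),
    (TensorProduct.lid k (H g)) (TensorProduct.map counit LinearMap.id (comul 1 g x))
      = castLM k H (one_mul g) x
  counit_right : ∀ (g : G) (x : H (g * (1 : G))),
    (TensorProduct.rid k (H g)) (TensorProduct.map LinearMap.id counit (comul g 1 x))
      = castLM k H (mul_one g) x
  comul_mul : ∀ (g h : G) (x y : H (g * h)),
    comul g h (mul (g * h) (x ⊗ₜ[k] y))
      = TensorProduct.map (mul g) (mul h)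
          ((TensorProduct.tensorTensorTensorComm k (H g) (H h) (H g) (H h))
            (comul g h x ⊗ₜ[k] comul g h y))
  comul_one : ∀ g h : G, comul g h (one (g * h)) = one g ⊗ₜ[k] one h
  counit_mul : ∀ x y : H (1 : G), counit (mul 1 (x ⊗ₜ[k] y)) = counit x * counit y
  counit_one : counit (one 1) = 1
  antipode_left : ∀ (g : G) (x : H (g⁻¹ * g)),
    mul g (TensorProduct.map (castLM k H (inv_inv g) ∘ₗ S g⁻¹) LinearMap.id (comul g⁻¹ g x))
      = counit (castLM k H (inv_mul_cancel g) x) • one g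
  antipode_right : ∀ (g : G) (x : H (g * g⁻¹)),
    mul g (TensorProduct.map LinearMap.id (castLM k H (inv_inv g) ∘ₗ S g⁻¹) (comul g g⁻¹ x))
      = counit (castLM k H (mul_inv_cancel g) x) • one g

/-- A Hopf `G`-coalgebra is involutory if `S g⁻¹ ∘ S g = id`. -/
def HopfGCoalgebra.Involutory {k : Type*} [Field k] {G : Type*} [Group G]
    {H : G → Type*} [∀ g, AddCommGroup (H g)] [∀ g, Module k (H g)]
    (A : HopfGCoalgebra k G H) : Prop :=
  ∀ (g : G) (x : H g), castLM k H (inv_inv g) (A.S g⁻¹ (A.S g x)) = x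


section Aux

set_option linter.unusedSectionVars false

variable {k : Type*} [Field k] {G : Type*} [Group G]
  {H : G → Type*} [∀ g, AddCommGroup (H g)] [∀ g, Module k (H g)]

theorem castLM_rfl {a : G} (p : a = a) : castLM k H p = (LinearMap.id : H a →ₗ[k] H a) := rfl

theorem castLM_castLM {a b c : G} (p : a = b) (q : b = c) (x : H a) :
    castLM k H q (castLM k H p x) = castLM k H (p.trans q) x := by subst p; subst q; rfl

variable (A : HopfGCoalgebra k G H)

theorem S_cast_cast {a b : G} (p : a = b) (q : b⁻¹ = a⁻¹) (x : H a) :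
    castLM k H q (A.S b (castLM k H p x)) = A.S a x := by subst p; rfl

theorem mul_cast {a b : G} (p : a = b) (x y : H a) :
    A.mul b (castLM k H p x ⊗ₜ[k] castLM k H p y) = castLM k H p (A.mul a (x ⊗ₜ[k] y)) := by
  subst p; rfl

theorem one_cast {a b : G} (p : a = b) : castLM k H p (A.one a) = A.one b := by subst p; rfl

theorem comul_cast {a b a' b' : G} (p : a = a') (q : b = b') (r : a * b = a' * b')
    (x : H (a * b)) :
    A.comul a' b' (castLM k H r x)
      = TensorProduct.map (castLM k H p) (castLM k H q) (A.comul a b x) := by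
  subst p; subst q
  simp [castLM_rfl]

/-- The algebra structure on `H p ⊗ H q`. -/
noncomputable def mA (p q : G) :
    (H p ⊗[k] H q) ⊗[k] (H p ⊗[k] H q) →ₗ[k] H p ⊗[k] H q :=
  TensorProduct.map (A.mul p) (A.mul q) ∘ₗ
    (TensorProduct.tensorTensorTensorComm k (H p) (H q) (H p) (H q)).toLinearMap

theorem mA_tmul (p q : G) (u s : H p) (v t : H q) :
    mA A p q ((u ⊗ₜ[k] v) ⊗ₜ[k] (s ⊗ₜ[k] t))
      = A.mul p (u ⊗ₜ[k] s) ⊗ₜ[k] A.mul q (v ⊗ₜ[k] t) := by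
  simp [mA, tensorTensorTensorComm_tmul]

theorem mA_assoc (p q : G) (α β γ : H p ⊗[k] H q) :
    mA A p q (mA A p q (α ⊗ₜ[k] β) ⊗ₜ[k] γ)
      = mA A p q (α ⊗ₜ[k] mA A p q (β ⊗ₜ[k] γ)) := by
  induction α using TensorProduct.induction_on with
  | zero => simp
  | add a b iha ihb => simp only [add_tmul, map_add, iha, ihb]
  | tmul u v =>
    induction β using TensorProduct.induction_on with
    | zero => simp
    | add a b iha ihb => simp only [add_tmul, tmul_add, map_add, iha, ihb]
    | tmul s t =>
      induction γ using TensorProduct.induction_on with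
      | zero => simp
      | add a b iha ihb => simp only [tmul_add, map_add, iha, ihb]
      | tmul x y => simp only [mA_tmul, A.mul_assoc']

theorem mA_one_left (p q : G) (α : H p ⊗[k] H q) :
    mA A p q ((A.one p ⊗ₜ[k] A.one q) ⊗ₜ[k] α) = α := by
  induction α using TensorProduct.induction_on with
  | zero => simp
  | add a b iha ihb => simp only [tmul_add, map_add, iha, ihb]
  | tmul u v => simp only [mA_tmul, A.one_mul']

theorem mA_one_right (p q : G) (α : H p ⊗[k] H q) :
    mA A p q (α ⊗ₜ[k] (A.one p ⊗ₜ[k] A.one q)) = α := by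
  induction α using TensorProduct.induction_on with
  | zero => simp
  | add a b iha ihb => simp only [add_tmul, map_add, iha, ihb]
  | tmul u v => simp only [mA_tmul, A.mul_one']

theorem comul_mulA (p q : G) (u v : H (p * q)) :
    A.comul p q (A.mul (p * q) (u ⊗ₜ[k] v))
      = mA A p q (A.comul p q u ⊗ₜ[k] A.comul p q v) :=
  A.comul_mul p q u v

/-- Antipode axiom, left form, restated at index `d`. -/
theorem antipode_left' (d : G) (x : H (d * d⁻¹)) :
    A.mul d⁻¹ (TensorProduct.map (A.S d) LinearMap.id (A.comul d d⁻¹ x))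
      = A.counit (castLM k H (mul_inv_cancel d) x) • A.one d⁻¹ := by
  have r : d * d⁻¹ = d⁻¹⁻¹ * d⁻¹ := by rw [inv_inv]
  have h1 := A.antipode_left d⁻¹ (castLM k H r x)
  rw [comul_cast A (inv_inv d).symm rfl r x] at h1
  rw [castLM_castLM] at h1
  have h2 : (TensorProduct.map (castLM k H (inv_inv d⁻¹) ∘ₗ A.S d⁻¹⁻¹) LinearMap.id)
      ((TensorProduct.map (castLM k H (inv_inv d).symm) (castLM k H rfl))
        (A.comul d d⁻¹ x))
      = TensorProduct.map (A.S d) LinearMap.id (A.comul d d⁻¹ x) := by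
    rw [← LinearMap.comp_apply, ← TensorProduct.map_comp]
    have e1 : (castLM k H (inv_inv d⁻¹) ∘ₗ A.S d⁻¹⁻¹) ∘ₗ castLM k H (inv_inv d).symm
        = A.S d := LinearMap.ext fun y => S_cast_cast A (inv_inv d).symm (inv_inv d⁻¹) y
    have e2 : (LinearMap.id ∘ₗ castLM k H (rfl : d⁻¹ = d⁻¹) : H d⁻¹ →ₗ[k] H d⁻¹)
        = LinearMap.id := rfl
    rw [e1, e2]
  rw [h2] at h1
  exact h1

/-- Antipode axiom, right form, restated at index `d`. -/
theorem antipode_right' (d : G) (x : H (d⁻¹ * d)) :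
    A.mul d⁻¹ (TensorProduct.map LinearMap.id (A.S d) (A.comul d⁻¹ d x))
      = A.counit (castLM k H (inv_mul_cancel d) x) • A.one d⁻¹ := by
  have r : d⁻¹ * d = d⁻¹ * d⁻¹⁻¹ := by rw [inv_inv]
  have h1 := A.antipode_right d⁻¹ (castLM k H r x)
  rw [comul_cast A rfl (inv_inv d).symm r x] at h1
  rw [castLM_castLM] at h1
  have h2 : (TensorProduct.map LinearMap.id (castLM k H (inv_inv d⁻¹) ∘ₗ A.S d⁻¹⁻¹))
      ((TensorProduct.map (castLM k H rfl) (castLM k H (inv_inv d).symm))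
        (A.comul d⁻¹ d x))
      = TensorProduct.map LinearMap.id (A.S d) (A.comul d⁻¹ d x) := by
    rw [← LinearMap.comp_apply, ← TensorProduct.map_comp]
    have e1 : (castLM k H (inv_inv d⁻¹) ∘ₗ A.S d⁻¹⁻¹) ∘ₗ castLM k H (inv_inv d).symm
        = A.S d := LinearMap.ext fun y => S_cast_cast A (inv_inv d).symm (inv_inv d⁻¹) y
    have e2 : (LinearMap.id ∘ₗ castLM k H (rfl : d⁻¹ = d⁻¹) : H d⁻¹ →ₗ[k] H d⁻¹)
        = LinearMap.id := rfl
    rw [e1, e2]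
  rw [h2] at h1
  exact h1

/-- Convolution product of linear maps into the algebra `H p ⊗ H q`. -/
noncomputable def conv (p q : G) {a b : G} (f : H a →ₗ[k] H p ⊗[k] H q)
    (f' : H b →ₗ[k] H p ⊗[k] H q) : H (a * b) →ₗ[k] H p ⊗[k] H q :=
  mA A p q ∘ₗ TensorProduct.map f f' ∘ₗ A.comul a b

theorem conv_apply (p q : G) {a b : G} (f : H a →ₗ[k] H p ⊗[k] H q)
    (f' : H b →ₗ[k] H p ⊗[k] H q) (x : H (a * b)) :
    conv A p q f f' x = mA A p q (TensorProduct.map f f' (A.comul a b x)) := rfl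

/-- The convolution unit. -/
noncomputable def eE (p q : G) {c : G} (rc : c = 1) : H c →ₗ[k] H p ⊗[k] H q :=
  LinearMap.smulRight (A.counit ∘ₗ castLM k H rc) (A.one p ⊗ₜ[k] A.one q)

theorem eE_apply (p q : G) {c : G} (rc : c = 1) (x : H c) :
    eE A p q rc x = A.counit (castLM k H rc x) • (A.one p ⊗ₜ[k] A.one q) := rfl

theorem counit_collapse_left (b : G) {c : G} (rc : c = 1) (y : H (c * b)) :
    TensorProduct.lid k (H b)
      (TensorProduct.map (A.counit ∘ₗ castLM k H rc) LinearMap.id (A.comul c b y))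
      = castLM k H (by rw [rc, one_mul]) y := by
  subst rc
  have e : A.counit ∘ₗ castLM k H (rfl : (1 : G) = 1) = A.counit := rfl
  rw [e]
  exact A.counit_left b y

theorem counit_collapse_right (b : G) {c : G} (rc : c = 1) (y : H (b * c)) :
    TensorProduct.rid k (H b)
      (TensorProduct.map LinearMap.id (A.counit ∘ₗ castLM k H rc) (A.comul b c y))
      = castLM k H (by rw [rc, mul_one]) y := by
  subst rc
  have e : A.counit ∘ₗ castLM k H (rfl : (1 : G) = 1) = A.counit := rfl
  rw [e]
  exact A.counit_right b y

theorem conv_eE_left (p q : G) {b c : G} (rc : c = 1) (f : H b →ₗ[k] H p ⊗[k] H q) :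
    conv A p q (eE A p q rc) f = f ∘ₗ castLM k H (by rw [rc, one_mul]) := by
  apply LinearMap.ext; intro y
  rw [conv_apply]
  have key : ∀ t : H c ⊗[k] H b,
      mA A p q (TensorProduct.map (eE A p q rc) f t)
        = f (TensorProduct.lid k (H b)
            (TensorProduct.map (A.counit ∘ₗ castLM k H rc) LinearMap.id t)) := by
    intro t
    induction t using TensorProduct.induction_on with
    | zero => simp
    | add a b iha ihb => simp only [map_add, iha, ihb]
    | tmul u w =>
      simp only [TensorProduct.map_tmul, eE_apply, LinearMap.id_coe, id_eq,
        LinearMap.comp_apply, TensorProduct.lid_tmul, map_smul]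
      rw [← TensorProduct.smul_tmul', map_smul, mA_one_left]
  rw [key, counit_collapse_left]
  rfl

theorem conv_eE_right (p q : G) {b c : G} (rc : c = 1) (f : H b →ₗ[k] H p ⊗[k] H q) :
    conv A p q f (eE A p q rc) = f ∘ₗ castLM k H (by rw [rc, mul_one]) := by
  apply LinearMap.ext; intro y
  rw [conv_apply]
  have key : ∀ t : H b ⊗[k] H c,
      mA A p q (TensorProduct.map f (eE A p q rc) t)
        = f (TensorProduct.rid k (H b)
            (TensorProduct.map LinearMap.id (A.counit ∘ₗ castLM k H rc) t)) := by
    intro t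
    induction t using TensorProduct.induction_on with
    | zero => simp
    | add a b iha ihb => simp only [map_add, iha, ihb]
    | tmul u w =>
      simp only [TensorProduct.map_tmul, eE_apply, LinearMap.id_coe, id_eq,
        LinearMap.comp_apply, TensorProduct.rid_tmul, map_smul]
      rw [TensorProduct.tmul_smul, map_smul, mA_one_right]
  rw [key, counit_collapse_right]
  rfl

theorem conv_assoc (p q : G) {a b c : G} (f : H a →ₗ[k] H p ⊗[k] H q)
    (f' : H b →ₗ[k] H p ⊗[k] H q) (f'' : H c →ₗ[k] H p ⊗[k] H q) (x : H (a * b * c)) :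
    conv A p q (conv A p q f f') f'' x
      = conv A p q f (conv A p q f' f'') (castLM k H (mul_assoc a b c) x) := by
  rw [conv_apply, conv_apply]
  have e1 : (TensorProduct.map (conv A p q f f') f'' :
        H (a * b) ⊗[k] H c →ₗ[k] (H p ⊗[k] H q) ⊗[k] (H p ⊗[k] H q))
      = TensorProduct.map (mA A p q ∘ₗ TensorProduct.map f f') f'' ∘ₗ
          TensorProduct.map (A.comul a b) LinearMap.id := by
    rw [← TensorProduct.map_comp]
    rfl
  have e2 : (TensorProduct.map f (conv A p q f' f'') :
        H a ⊗[k] H (b * c) →ₗ[k] (H p ⊗[k] H q) ⊗[k] (H p ⊗[k] H q))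
      = TensorProduct.map f (mA A p q ∘ₗ TensorProduct.map f' f'') ∘ₗ
          TensorProduct.map LinearMap.id (A.comul b c) := by
    rw [← TensorProduct.map_comp]
    rfl
  have hco : TensorProduct.map (A.comul a b) LinearMap.id (A.comul (a * b) c x)
      = (TensorProduct.assoc k (H a) (H b) (H c)).symm
          (TensorProduct.map LinearMap.id (A.comul b c)
            (A.comul a (b * c) (castLM k H (mul_assoc a b c) x))) := by
    rw [← A.coassoc a b c x, LinearEquiv.symm_apply_apply]
  rw [e1, e2, LinearMap.comp_apply, LinearMap.comp_apply, hco]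
  generalize (TensorProduct.map LinearMap.id (A.comul b c)
      (A.comul a (b * c) (castLM k H (mul_assoc a b c) x))) = t
  induction t using TensorProduct.induction_on with
  | zero => simp
  | add s t ihs iht => simp only [map_add, ihs, iht]
  | tmul u s =>
    induction s using TensorProduct.induction_on with
    | zero => simp
    | add s t ihs iht => simp only [TensorProduct.tmul_add, map_add, ihs, iht]
    | tmul v w =>
      simp only [TensorProduct.assoc_symm_tmul, TensorProduct.map_tmul,
        LinearMap.comp_apply, LinearMap.id_coe, id_eq]
      exact mA_assoc A p q (f u) (f' v) (f'' w)

/-- `μ = Δ_{h⁻¹,g⁻¹} ∘ cast : H (gh)⁻¹ → H h⁻¹ ⊗ H g⁻¹`. -/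
noncomputable def muMap (g h : G) : H ((g * h)⁻¹) →ₗ[k] H h⁻¹ ⊗[k] H g⁻¹ :=
  A.comul h⁻¹ g⁻¹ ∘ₗ castLM k H (mul_inv_rev g h)

noncomputable def nu1 (g h : G) : H (g * h) →ₗ[k] H h⁻¹ ⊗[k] H g⁻¹ :=
  muMap A g h ∘ₗ A.S (g * h)

noncomputable def phiM (g h : G) : H g ⊗[k] H h →ₗ[k] H h⁻¹ ⊗[k] H g⁻¹ :=
  TensorProduct.map (A.S h) (A.S g) ∘ₗ (TensorProduct.comm k (H g) (H h)).toLinearMap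

noncomputable def nu2 (g h : G) : H (g * h) →ₗ[k] H h⁻¹ ⊗[k] H g⁻¹ :=
  phiM A g h ∘ₗ A.comul g h

theorem muMap_mul (g h : G) (u v : H ((g * h)⁻¹)) :
    muMap A g h (A.mul (g * h)⁻¹ (u ⊗ₜ[k] v))
      = mA A h⁻¹ g⁻¹ (muMap A g h u ⊗ₜ[k] muMap A g h v) := by
  show A.comul h⁻¹ g⁻¹ (castLM k H (mul_inv_rev g h) (A.mul (g * h)⁻¹ (u ⊗ₜ[k] v))) = _
  rw [← mul_cast A (mul_inv_rev g h), comul_mulA]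
  rfl

theorem muMap_one (g h : G) :
    muMap A g h (A.one (g * h)⁻¹) = A.one h⁻¹ ⊗ₜ[k] A.one g⁻¹ := by
  show A.comul h⁻¹ g⁻¹ (castLM k H (mul_inv_rev g h) (A.one (g * h)⁻¹)) = _
  rw [one_cast A (mul_inv_rev g h), A.comul_one]

theorem conv_nu1_mu (g h : G) :
    conv A h⁻¹ g⁻¹ (nu1 A g h) (muMap A g h)
      = eE A h⁻¹ g⁻¹ (mul_inv_cancel (g * h)) := by
  apply LinearMap.ext; intro x
  rw [conv_apply]
  have key : ∀ t : H (g * h) ⊗[k] H ((g * h)⁻¹),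
      mA A h⁻¹ g⁻¹ (TensorProduct.map (nu1 A g h) (muMap A g h) t)
        = muMap A g h
            (A.mul (g * h)⁻¹ (TensorProduct.map (A.S (g * h)) LinearMap.id t)) := by
    intro t
    induction t using TensorProduct.induction_on with
    | zero => simp
    | add a b iha ihb => simp only [map_add, iha, ihb]
    | tmul u v =>
      simp only [TensorProduct.map_tmul, LinearMap.id_coe, id_eq]
      rw [muMap_mul]
      rfl
  rw [key, antipode_left' A (g * h) x, map_smul, muMap_one]
  rfl

noncomputable def lamH (g h : G) : H h⁻¹ ⊗[k] H h →ₗ[k] H h⁻¹ ⊗[k] H g⁻¹ :=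
  (TensorProduct.mk k (H h⁻¹) (H g⁻¹)).flip (A.one g⁻¹) ∘ₗ A.mul h⁻¹ ∘ₗ
    TensorProduct.map LinearMap.id (A.S h)

theorem lamH_apply (g h : G) (t : H h⁻¹ ⊗[k] H h) :
    lamH A g h t
      = A.mul h⁻¹ (TensorProduct.map LinearMap.id (A.S h) t) ⊗ₜ[k] A.one g⁻¹ := rfl

theorem lamH_tmul (g h : G) (u : H h⁻¹) (w : H h) :
    lamH A g h (u ⊗ₜ[k] w) = A.mul h⁻¹ (u ⊗ₜ[k] A.S h w) ⊗ₜ[k] A.one g⁻¹ := rfl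

theorem collapse_right_leg (g h : G) (s : H h⁻¹ ⊗[k] H (g⁻¹ * (g * h))) :
    mA A h⁻¹ g⁻¹ (TensorProduct.map LinearMap.id (nu2 A g h)
      ((TensorProduct.assoc k (H h⁻¹) (H g⁻¹) (H (g * h))).symm
        (TensorProduct.map LinearMap.id (A.comul g⁻¹ (g * h)) s)))
    = lamH A g h (TensorProduct.map LinearMap.id
        (castLM k H (inv_mul_cancel_left g h)) s) := by
  induction s using TensorProduct.induction_on with
  | zero => simp
  | add a b iha ihb => simp only [map_add, iha, ihb]
  | tmul u v =>
    simp only [TensorProduct.map_tmul, LinearMap.id_coe, id_eq]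
    have hb : ∀ s2 : H g⁻¹ ⊗[k] H (g * h),
        mA A h⁻¹ g⁻¹ (TensorProduct.map LinearMap.id (nu2 A g h)
          ((TensorProduct.assoc k (H h⁻¹) (H g⁻¹) (H (g * h))).symm (u ⊗ₜ[k] s2)))
        = mA A h⁻¹ g⁻¹ (TensorProduct.map LinearMap.id (phiM A g h)
          ((TensorProduct.assoc k (H h⁻¹) (H g⁻¹) (H g ⊗[k] H h)).symm
            (u ⊗ₜ[k] TensorProduct.map LinearMap.id (A.comul g h) s2))) := by
      intro s2
      induction s2 using TensorProduct.induction_on with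
      | zero => simp
      | add a b iha ihb => simp only [TensorProduct.tmul_add, map_add, iha, ihb]
      | tmul v1 w =>
        simp only [TensorProduct.map_tmul, TensorProduct.assoc_symm_tmul,
          LinearMap.id_coe, id_eq]
        rfl
    rw [hb]
    have qv : g⁻¹ * (g * h) = g⁻¹ * g * h := (mul_assoc g⁻¹ g h).symm
    have hvv : castLM k H (mul_assoc g⁻¹ g h) (castLM k H qv v) = v := by
      rw [castLM_castLM]; rfl
    have co2 := A.coassoc g⁻¹ g h (castLM k H qv v)
    rw [hvv] at co2
    rw [← co2]
    have hc : ∀ t : H (g⁻¹ * g) ⊗[k] H h,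
        mA A h⁻¹ g⁻¹ (TensorProduct.map LinearMap.id (phiM A g h)
          ((TensorProduct.assoc k (H h⁻¹) (H g⁻¹) (H g ⊗[k] H h)).symm
            (u ⊗ₜ[k] (TensorProduct.assoc k (H g⁻¹) (H g) (H h))
              (TensorProduct.map (A.comul g⁻¹ g) LinearMap.id t))))
        = lamH A g h (u ⊗ₜ[k] (TensorProduct.lid k (H h))
            (TensorProduct.map (A.counit ∘ₗ castLM k H (inv_mul_cancel g))
              LinearMap.id t)) := by
      intro t
      induction t using TensorProduct.induction_on with
      | zero => simp
      | add a b iha ihb => simp only [map_add, TensorProduct.tmul_add, iha, ihb]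
      | tmul m w =>
        simp only [TensorProduct.map_tmul, LinearMap.comp_apply, LinearMap.id_coe,
          id_eq, TensorProduct.lid_tmul]
        have h1 : lamH A g h (u ⊗ₜ[k]
              (A.counit (castLM k H (inv_mul_cancel g) m) • w))
            = A.mul h⁻¹ (u ⊗ₜ[k] A.S h w) ⊗ₜ[k]
                (A.counit (castLM k H (inv_mul_cancel g) m) • A.one g⁻¹) := by
          rw [TensorProduct.tmul_smul, map_smul, lamH_tmul,
            TensorProduct.smul_tmul', TensorProduct.smul_tmul]
        rw [h1, ← antipode_right' A g m]
        generalize A.comul g⁻¹ g m = dm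
        induction dm using TensorProduct.induction_on with
        | zero => simp
        | add a b iha ihb =>
          simp only [map_add, TensorProduct.add_tmul, TensorProduct.tmul_add,
            iha, ihb]
        | tmul m1 m2 =>
          simp only [TensorProduct.assoc_tmul, TensorProduct.assoc_symm_tmul,
            TensorProduct.map_tmul, LinearMap.id_coe, id_eq, mA_tmul, phiM,
            LinearMap.comp_apply, LinearEquiv.coe_coe, TensorProduct.comm_tmul]
    rw [hc, counit_collapse_left, castLM_castLM]

theorem conv_mu_nu2 (g h : G) :
    conv A h⁻¹ g⁻¹ (muMap A g h) (nu2 A g h)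
      = eE A h⁻¹ g⁻¹ (inv_mul_cancel (g * h)) := by
  apply LinearMap.ext; intro x
  rw [conv_apply, eE_apply]
  have r1 : (g * h)⁻¹ * (g * h) = h⁻¹ * g⁻¹ * (g * h) := by rw [mul_inv_rev]
  have e1 : A.comul (h⁻¹ * g⁻¹) (g * h) (castLM k H r1 x)
      = TensorProduct.map (castLM k H (mul_inv_rev g h)) LinearMap.id
          (A.comul ((g * h)⁻¹) (g * h) x) := by
    rw [comul_cast A (mul_inv_rev g h) rfl r1 x, castLM_rfl]
  have e2 : (TensorProduct.map (muMap A g h) (nu2 A g h) :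
        H ((g * h)⁻¹) ⊗[k] H (g * h) →ₗ[k] (H h⁻¹ ⊗[k] H g⁻¹) ⊗[k] (H h⁻¹ ⊗[k] H g⁻¹))
      = TensorProduct.map (A.comul h⁻¹ g⁻¹) (nu2 A g h) ∘ₗ
          TensorProduct.map (castLM k H (mul_inv_rev g h)) LinearMap.id := by
    rw [← TensorProduct.map_comp]
    rfl
  rw [e2, LinearMap.comp_apply, ← e1]
  have e3 : (TensorProduct.map (A.comul h⁻¹ g⁻¹) (nu2 A g h) :
        H (h⁻¹ * g⁻¹) ⊗[k] H (g * h) →ₗ[k] (H h⁻¹ ⊗[k] H g⁻¹) ⊗[k] (H h⁻¹ ⊗[k] H g⁻¹))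
      = TensorProduct.map LinearMap.id (nu2 A g h) ∘ₗ
          TensorProduct.map (A.comul h⁻¹ g⁻¹) LinearMap.id := by
    rw [← TensorProduct.map_comp]
    rfl
  rw [e3, LinearMap.comp_apply]
  have co1 := A.coassoc h⁻¹ g⁻¹ (g * h) (castLM k H r1 x)
  have e4 : TensorProduct.map (A.comul h⁻¹ g⁻¹) LinearMap.id
        (A.comul (h⁻¹ * g⁻¹) (g * h) (castLM k H r1 x))
      = (TensorProduct.assoc k (H h⁻¹) (H g⁻¹) (H (g * h))).symm
          (TensorProduct.map LinearMap.id (A.comul g⁻¹ (g * h))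
            (A.comul h⁻¹ (g⁻¹ * (g * h))
              (castLM k H (mul_assoc h⁻¹ g⁻¹ (g * h)) (castLM k H r1 x)))) := by
    rw [← co1, LinearEquiv.symm_apply_apply]
  rw [e4, collapse_right_leg]
  have r5 : h⁻¹ * (g⁻¹ * (g * h)) = h⁻¹ * h := by rw [inv_mul_cancel_left]
  have e5 : TensorProduct.map LinearMap.id (castLM k H (inv_mul_cancel_left g h))
        (A.comul h⁻¹ (g⁻¹ * (g * h))
          (castLM k H (mul_assoc h⁻¹ g⁻¹ (g * h)) (castLM k H r1 x)))
      = A.comul h⁻¹ h (castLM k H r5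
          (castLM k H (mul_assoc h⁻¹ g⁻¹ (g * h)) (castLM k H r1 x))) := by
    rw [comul_cast A rfl (inv_mul_cancel_left g h) r5, castLM_rfl]
  rw [e5, lamH_apply, antipode_right' A h, ← TensorProduct.smul_tmul',
    castLM_castLM, castLM_castLM, castLM_castLM]

end Aux

/-- The antipode of a Hopf `G`-coalgebra is an anti-coalgebra morphism:
`Δ_{h⁻¹,g⁻¹} ∘ S_{gh} = (S_h ⊗ S_g) ∘ τ ∘ Δ_{g,h}` where `τ` is the flip. -/
theorem antipode_anti_coalgebra {k : Type*} [Field k] {G : Type*} [Group G]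
    {H : G → Type*} [∀ g, AddCommGroup (H g)] [∀ g, Module k (H g)]
    (A : HopfGCoalgebra k G H) :
    ∀ (g h : G) (x : H (g * h)),
      A.comul h⁻¹ g⁻¹ (castLM k H (mul_inv_rev g h) (A.S (g * h) x))
        = TensorProduct.map (A.S h) (A.S g)
            ((TensorProduct.comm k (H g) (H h)) (A.comul g h x)) := by
  intro g h x
  show nu1 A g h x = nu2 A g h x
  have p1 : g * h = (g * h) * (g * h)⁻¹ * (g * h) := by rw [mul_inv_cancel, one_mul]
  have T2 := conv_assoc A h⁻¹ g⁻¹ (nu1 A g h) (muMap A g h) (nu2 A g h)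
    (castLM k H p1 x)
  rw [conv_nu1_mu, conv_eE_left] at T2
  rw [conv_mu_nu2, conv_eE_right] at T2
  simp only [LinearMap.comp_apply, castLM_castLM] at T2
  exact T2.symm
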